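/- For every m ∈ ℕ, the preimage entropy dimension of the iterate T^m equals that of T: D_pre(T^m) = D_pre(T). -/

import Mathlib

open Filter Set
open scoped ENNReal

variable {X : Type*}

/-- The Bowen metric `d_{T,n}(x,y) = max_{0 ≤ j < n} d(T^j x, T^j y)`. -/
noncomputable def bowenDist [PseudoMetricSpace X] (T : X → X) (n : ℕ) (x y : X) : ℝ :=
  ⨆ j : Fin n, dist (T^[(j : ℕ)] x) (T^[(j : ℕ)] y)

/-- `E` is an `(n,ε,K,T)`-separated set. -/
def IsPreSeparated [PseudoMetricSpace X] (T : X → X) (n : ℕ) (ε : ℝ) (K : Set X)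
    (E : Set X) : Prop :=
  E ⊆ K ∧ ∀ x ∈ E, ∀ y ∈ E, x ≠ y → ε < bowenDist T n x y

/-- `E` is an `(n,ε,K,T)`-spanning set. -/
def IsPreSpanning [PseudoMetricSpace X] (T : X → X) (n : ℕ) (ε : ℝ) (K : Set X)
    (E : Set X) : Prop :=
  E ⊆ K ∧ ∀ x ∈ K, ∃ y ∈ E, bowenDist T n x y ≤ ε

/-- `r(n,ε,K,T)`: maximal cardinality of an `(n,ε,K,T)`-separated set. -/
noncomputable def sepMax [PseudoMetricSpace X] (T : X → X) (n : ℕ) (ε : ℝ) (K : Set X) : ℝ≥0∞ :=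
  ⨆ (E : Finset X) (_ : IsPreSeparated T n ε K ↑E), (E.card : ℝ≥0∞)

/-- `s(n,ε,K,T)`: minimal cardinality of an `(n,ε,K,T)`-spanning set. -/
noncomputable def spanMin [PseudoMetricSpace X] (T : X → X) (n : ℕ) (ε : ℝ) (K : Set X) : ℝ≥0∞ :=
  ⨅ (E : Finset X) (_ : IsPreSpanning T n ε K ↑E), (E.card : ℝ≥0∞)

/-- The `s`-preimage entropy
`D_pre(s,T) = lim_{ε→0} limsup_n (1/n^s) log sup_{x ∈ X, k ≥ n} r(n,ε,T^{-k}(x),T)`,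
where the (monotone) limit as `ε → 0` is expressed as a supremum over `ε > 0`. -/
noncomputable def preEnt [PseudoMetricSpace X] (T : X → X) (s : ℝ) : EReal :=
  ⨆ (ε : ℝ) (_ : 0 < ε), Filter.atTop.limsup fun n : ℕ =>
    (((((n : ℝ) ^ s)⁻¹ : ℝ) : EReal)) *
      ENNReal.log (⨆ (x : X) (k : ℕ) (_ : n ≤ k), sepMax T n ε (T^[k] ⁻¹' {x}))

/-- The preimage entropy `h_pre(T)`. -/
noncomputable def preimageEntropy [PseudoMetricSpace X] (T : X → X) : EReal := preEnt T 1

/-- The preimage entropy dimension `D_pre(T) = inf {s > 0 : D_pre(s,T) = 0}`. -/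
noncomputable def preDim [PseudoMetricSpace X] (T : X → X) : ℝ≥0∞ :=
  ⨅ (s : ℝ) (_ : 0 < s ∧ preEnt T s = 0), ENNReal.ofReal s

/-! ### Auxiliary lemmas -/

section Aux

variable [PseudoMetricSpace X] {T : X → X}

lemma bowenDist_nonneg (T : X → X) (n : ℕ) (x y : X) : 0 ≤ bowenDist T n x y :=
  Real.iSup_nonneg fun _ => dist_nonneg

lemma dist_le_bowenDist (T : X → X) {n : ℕ} (j : Fin n) (x y : X) :
    dist (T^[(j : ℕ)] x) (T^[(j : ℕ)] y) ≤ bowenDist T n x y :=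
  le_ciSup (f := fun j : Fin n => dist (T^[(j : ℕ)] x) (T^[(j : ℕ)] y))
    (Set.Finite.bddAbove (Set.finite_range _)) j

lemma bowenDist_mono {n n' : ℕ} (h : n ≤ n') (x y : X) :
    bowenDist T n x y ≤ bowenDist T n' x y :=
  Real.iSup_le (fun j => dist_le_bowenDist T ⟨(j : ℕ), lt_of_lt_of_le j.isLt h⟩ x y)
    (bowenDist_nonneg T n' x y)

lemma bowenDist_iterate_le {m : ℕ} (hm : 0 < m) (n : ℕ) (x y : X) :
    bowenDist (T^[m]) n x y ≤ bowenDist T (n * m) x y := by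
  refine Real.iSup_le (fun j => ?_) (bowenDist_nonneg T (n * m) x y)
  have hrw : (T^[m])^[(j : ℕ)] = T^[m * (j : ℕ)] := (Function.iterate_mul T m (j : ℕ)).symm
  rw [hrw]
  have hj : m * (j : ℕ) < n * m := by
    rw [Nat.mul_comm n m]
    exact (Nat.mul_lt_mul_left hm).2 j.isLt
  exact dist_le_bowenDist T ⟨m * (j : ℕ), hj⟩ x y

lemma bowenDist_le_of_iterate {m : ℕ} (hm : 0 < m) {δ ε : ℝ} (hε : 0 ≤ ε)
    (hδ : ∀ x y : X, dist x y ≤ δ → ∀ j < m, dist (T^[j] x) (T^[j] y) ≤ ε)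
    {n : ℕ} {x y : X} (h : bowenDist (T^[m]) n x y ≤ δ) :
    bowenDist T (n * m) x y ≤ ε := by
  refine Real.iSup_le (fun i => ?_) hε
  have hi : (i : ℕ) < n * m := i.isLt
  have hq : (i : ℕ) / m < n := (Nat.div_lt_iff_lt_mul hm).2 hi
  have hr : (i : ℕ) % m < m := Nat.mod_lt _ hm
  have hid : (i : ℕ) % m + m * ((i : ℕ) / m) = (i : ℕ) := Nat.mod_add_div _ _
  have hrw : T^[(i : ℕ)] x = T^[(i : ℕ) % m] ((T^[m])^[(i : ℕ) / m] x) := by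
    rw [← Function.iterate_mul, ← Function.iterate_add_apply, hid]
  have hrw' : T^[(i : ℕ)] y = T^[(i : ℕ) % m] ((T^[m])^[(i : ℕ) / m] y) := by
    rw [← Function.iterate_mul, ← Function.iterate_add_apply, hid]
  rw [hrw, hrw']
  exact hδ _ _ (le_trans (dist_le_bowenDist (T^[m]) ⟨(i : ℕ) / m, hq⟩ x y) h) _ hr

lemma sepMax_le {T₁ T₂ : X → X} {n₁ n₂ : ℕ} {ε₁ ε₂ : ℝ} {K₁ K₂ : Set X}
    (h : ∀ E : Finset X, IsPreSeparated T₁ n₁ ε₁ K₁ ↑E → IsPreSeparated T₂ n₂ ε₂ K₂ ↑E) :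
    sepMax T₁ n₁ ε₁ K₁ ≤ sepMax T₂ n₂ ε₂ K₂ :=
  iSup₂_le fun E hE => le_iSup₂ (f := fun (E : Finset X) (_ : IsPreSeparated T₂ n₂ ε₂ K₂ ↑E) =>
    (E.card : ℝ≥0∞)) E (h E hE)

/-- `S(n,ε,T) = sup_{x, k ≥ n} r(n,ε,T^{-k}(x),T)`. -/
noncomputable def Sfun (T : X → X) (n : ℕ) (ε : ℝ) : ℝ≥0∞ :=
  ⨆ (x : X) (k : ℕ) (_ : n ≤ k), sepMax T n ε (T^[k] ⁻¹' {x})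

lemma le_Sfun (x : X) {n k : ℕ} (hk : n ≤ k) {ε : ℝ} :
    sepMax T n ε (T^[k] ⁻¹' {x}) ≤ Sfun T n ε :=
  le_iSup_of_le x (le_iSup_of_le k (le_iSup_of_le hk le_rfl))

lemma one_le_Sfun [Nonempty X] (T : X → X) (n : ℕ) (ε : ℝ) : 1 ≤ Sfun T n ε := by
  obtain ⟨x0⟩ := ‹Nonempty X›
  have hsep : IsPreSeparated T n ε (T^[n] ⁻¹' {T^[n] x0}) ↑({x0} : Finset X) := by
    constructor
    · intro y hy
      simp only [Finset.coe_singleton, mem_singleton_iff] at hy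
      subst hy
      exact rfl
    · intro a ha b hb hab
      simp only [Finset.coe_singleton, mem_singleton_iff] at ha hb
      exact absurd (ha.trans hb.symm) hab
  have h1 : (1 : ℝ≥0∞) ≤ sepMax T n ε (T^[n] ⁻¹' {T^[n] x0}) := by
    have := le_iSup₂ (f := fun (E : Finset X)
      (_ : IsPreSeparated T n ε (T^[n] ⁻¹' {T^[n] x0}) ↑E) => (E.card : ℝ≥0∞))
      ({x0} : Finset X) hsep
    simpa [sepMax] using this
  exact h1.trans (le_Sfun _ le_rfl)

lemma Sfun_iterate_le {m : ℕ} (hm : 0 < m) (n : ℕ) (ε : ℝ) :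
    Sfun (T^[m]) n ε ≤ Sfun T (n * m) ε := by
  refine iSup_le fun x => iSup_le fun k => iSup_le fun hk => ?_
  have h1 : sepMax (T^[m]) n ε ((T^[m])^[k] ⁻¹' {x}) ≤ sepMax T (n * m) ε (T^[m * k] ⁻¹' {x}) := by
    rw [← Function.iterate_mul]
    refine sepMax_le fun E hE => ⟨hE.1, fun a ha b hb hab => ?_⟩
    exact lt_of_lt_of_le (hE.2 a ha b hb hab) (bowenDist_iterate_le hm n a b)
  refine h1.trans (le_Sfun x ?_)
  rw [Nat.mul_comm n m]
  exact Nat.mul_le_mul_left m hk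

lemma Sfun_le_iterate {m : ℕ} (hm : 0 < m) {δ ε : ℝ} (hε : 0 ≤ ε)
    (hδ : ∀ x y : X, dist x y ≤ δ → ∀ j < m, dist (T^[j] x) (T^[j] y) ≤ ε)
    (n : ℕ) :
    Sfun T n ε ≤ Sfun (T^[m]) (n / m + 1) δ := by
  refine iSup_le fun x => iSup_le fun k => iSup_le fun hk => ?_
  set N := n / m + 1 with hN
  set l := k / m + 1 with hl
  have hkl : k < m * l := by
    calc k = m * (k / m) + k % m := (Nat.div_add_mod k m).symm
    _ < m * (k / m) + m := by
        exact Nat.add_lt_add_left (Nat.mod_lt _ hm) _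
    _ = m * l := by rw [hl]; ring
  have hnN : n < m * N := by
    calc n = m * (n / m) + n % m := (Nat.div_add_mod n m).symm
    _ < m * (n / m) + m := by
        exact Nat.add_lt_add_left (Nat.mod_lt _ hm) _
    _ = m * N := by rw [hN]; ring
  have hnN' : n ≤ N * m := by rw [Nat.mul_comm]; exact hnN.le
  have hsub : T^[k] ⁻¹' {x} ⊆ (T^[m])^[l] ⁻¹' {T^[m * l - k] x} := by
    intro z hz
    simp only [mem_preimage, mem_singleton_iff] at hz ⊢
    have h2 : (T^[m])^[l] z = T^[m * l - k] (T^[k] z) := by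
      rw [← Function.iterate_add_apply, Nat.sub_add_cancel hkl.le, Function.iterate_mul]
    rw [h2, hz]
  have h1 : sepMax T n ε (T^[k] ⁻¹' {x}) ≤
      sepMax (T^[m]) N δ ((T^[m])^[l] ⁻¹' {T^[m * l - k] x}) := by
    refine sepMax_le fun E hE => ⟨hE.1.trans hsub, fun a ha b hb hab => ?_⟩
    have h2 : ε < bowenDist T (N * m) a b :=
      lt_of_lt_of_le (hE.2 a ha b hb hab) (bowenDist_mono hnN' a b)
    by_contra hle
    push_neg at hle
    exact absurd (bowenDist_le_of_iterate hm hε hδ hle) (not_le.2 h2)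
  refine h1.trans (le_Sfun _ ?_)
  exact Nat.add_le_add_right (Nat.div_le_div_right hk) 1

/-- The sequence whose `limsup` appears in `preEnt`. -/
noncomputable def uSeq (T : X → X) (s ε : ℝ) (n : ℕ) : EReal :=
  (((((n : ℝ) ^ s)⁻¹ : ℝ) : EReal)) * ENNReal.log (Sfun T n ε)

lemma preEnt_eq (T : X → X) (s : ℝ) :
    preEnt T s = ⨆ (ε : ℝ) (_ : 0 < ε), Filter.atTop.limsup (uSeq T s ε) := rfl

lemma uSeq_nonneg [Nonempty X] (T : X → X) (s ε : ℝ) {n : ℕ} (hn : 1 ≤ n) :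
    0 ≤ uSeq T s ε n := by
  have hc : (0 : ℝ) ≤ ((n : ℝ) ^ s)⁻¹ :=
    inv_nonneg.2 (Real.rpow_nonneg (Nat.cast_nonneg n) s)
  have hlog : (0 : EReal) ≤ ENNReal.log (Sfun T n ε) :=
    ENNReal.zero_le_log_iff.2 (one_le_Sfun T n ε)
  calc (0 : EReal) = ((((n : ℝ) ^ s)⁻¹ : ℝ) : EReal) * 0 := by rw [mul_zero]
  _ ≤ uSeq T s ε n := mul_le_mul_of_nonneg_left hlog (by exact_mod_cast hc)

lemma limsup_uSeq_nonneg [Nonempty X] (T : X → X) (s ε : ℝ) :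
    0 ≤ Filter.atTop.limsup (uSeq T s ε) := by
  refine le_limsup_of_frequently_le ?_
  exact ((eventually_ge_atTop 1).mono fun n hn => uSeq_nonneg T s ε hn).frequently

lemma preEnt_zero_iff [Nonempty X] (T : X → X) (s : ℝ) :
    preEnt T s = 0 ↔ ∀ ε : ℝ, 0 < ε → Filter.atTop.limsup (uSeq T s ε) ≤ 0 := by
  rw [preEnt_eq]
  constructor
  · intro h ε hε
    rw [← h]
    exact le_iSup₂ (f := fun (ε : ℝ) (_ : 0 < ε) => Filter.atTop.limsup (uSeq T s ε)) ε hε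
  · intro h
    refine le_antisymm (iSup₂_le h) ?_
    exact le_iSup₂_of_le 1 one_pos (limsup_uSeq_nonneg T s 1)

/-- key limsup comparison lemma. -/
lemma limsup_const_comp_nonpos {v : ℕ → EReal} {g : ℕ → ℕ} {c : ℝ} (hc : 0 < c)
    (hg : Filter.Tendsto g Filter.atTop Filter.atTop)
    (hv : Filter.atTop.limsup v ≤ 0) :
    Filter.atTop.limsup (fun n => (c : EReal) * v (g n)) ≤ 0 := by
  refine le_of_forall_gt_imp_ge_of_dense fun b hb => ?_
  induction b with
  | bot => exact absurd hb (by simp)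
  | top => exact le_top
  | coe r =>
    have hr : 0 < r := by exact_mod_cast hb
    have hrc : (0 : EReal) < ((r / c : ℝ) : EReal) := by exact_mod_cast div_pos hr hc
    have hev : ∀ᶠ N in Filter.atTop, v N < ((r / c : ℝ) : EReal) :=
      eventually_lt_of_limsup_lt (lt_of_le_of_lt hv hrc)
    refine limsup_le_of_le ?_ ((hg.eventually hev).mono fun n h => ?_)
    · isBoundedDefault
    calc (c : EReal) * v (g n) ≤ (c : EReal) * ((r / c : ℝ) : EReal) :=
        mul_le_mul_of_nonneg_left h.le (by exact_mod_cast hc.le)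
    _ = ((c * (r / c) : ℝ) : EReal) := (EReal.coe_mul _ _).symm
    _ = (r : EReal) := by rw [mul_div_cancel₀ _ hc.ne']

lemma limsup_comp_nonpos {v : ℕ → EReal} {g : ℕ → ℕ}
    (hg : Filter.Tendsto g Filter.atTop Filter.atTop)
    (hv : Filter.atTop.limsup v ≤ 0) :
    Filter.atTop.limsup (fun n => v (g n)) ≤ 0 := by
  have := limsup_const_comp_nonpos one_pos hg hv
  simpa using this

end Aux

section Main

variable [MetricSpace X] [CompactSpace X] {T : X → X}

/-- Uniform continuity for the first `m` iterates. -/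
lemma exists_iterate_delta (hT : Continuous T) (m : ℕ) {ε : ℝ} (hε : 0 < ε) :
    ∃ δ : ℝ, 0 < δ ∧ δ ≤ ε ∧
      ∀ x y : X, dist x y ≤ δ → ∀ j < m, dist (T^[j] x) (T^[j] y) ≤ ε := by
  induction m with
  | zero => exact ⟨ε, hε, le_rfl, fun x y _ j hj => absurd hj (Nat.not_lt_zero j)⟩
  | succ m ih =>
    obtain ⟨δ', hδ'0, hδ'ε, hδ'⟩ := ih
    have hu : UniformContinuous (T^[m]) :=
      CompactSpace.uniformContinuous_of_continuous (hT.iterate m)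
    obtain ⟨δ0, hδ00, hδ0⟩ := Metric.uniformContinuous_iff.1 hu ε hε
    refine ⟨min δ' (δ0 / 2), lt_min hδ'0 (half_pos hδ00), (min_le_left _ _).trans hδ'ε,
      fun x y hxy j hj => ?_⟩
    rcases Nat.lt_succ_iff_lt_or_eq.1 hj with hj' | hj'
    · exact hδ' x y (hxy.trans (min_le_left _ _)) j hj'
    · subst hj'
      have : dist x y < δ0 :=
        lt_of_le_of_lt (hxy.trans (min_le_right _ _)) (half_lt_self hδ00)
      exact (hδ0 this).le

lemma dir_forward {m : ℕ} (hm : 0 < m) {s : ℝ} (hs : 0 < s) [Nonempty X]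
    (h : ∀ ε : ℝ, 0 < ε → Filter.atTop.limsup (uSeq T s ε) ≤ 0) :
    ∀ ε : ℝ, 0 < ε → Filter.atTop.limsup (uSeq (T^[m]) s ε) ≤ 0 := by
  intro ε hε
  have hms : (0 : ℝ) < (m : ℝ) ^ s := Real.rpow_pos_of_pos (by exact_mod_cast hm) s
  have hg : Filter.Tendsto (fun n : ℕ => n * m) Filter.atTop Filter.atTop := by
    refine Filter.tendsto_atTop_atTop.2 fun b => ⟨b, fun n hn => ?_⟩
    exact hn.trans (Nat.le_mul_of_pos_right n hm)
  have hptwise : ∀ᶠ n in Filter.atTop,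
      uSeq (T^[m]) s ε n ≤ (((m : ℝ) ^ s : ℝ) : EReal) * uSeq T s ε (n * m) := by
    filter_upwards [eventually_ge_atTop 1] with n hn
    have hcoef : (((n : ℝ) ^ s)⁻¹ : ℝ) = ((m : ℝ) ^ s) * ((((n * m : ℕ) : ℝ) ^ s)⁻¹ : ℝ) := by
      have hcast : ((n * m : ℕ) : ℝ) = (n : ℝ) * (m : ℝ) := by push_cast; ring
      rw [hcast, Real.mul_rpow (Nat.cast_nonneg n) (Nat.cast_nonneg m), mul_inv]
      field_simp
    have hlog : ENNReal.log (Sfun (T^[m]) n ε) ≤ ENNReal.log (Sfun T (n * m) ε) :=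
      ENNReal.log_monotone (Sfun_iterate_le hm n ε)
    calc uSeq (T^[m]) s ε n
        ≤ (((((n : ℝ) ^ s)⁻¹ : ℝ) : EReal)) * ENNReal.log (Sfun T (n * m) ε) :=
          mul_le_mul_of_nonneg_left hlog
            (by exact_mod_cast inv_nonneg.2 (Real.rpow_nonneg (Nat.cast_nonneg n) s))
      _ = (((m : ℝ) ^ s : ℝ) : EReal) * uSeq T s ε (n * m) := by
          rw [uSeq, ← mul_assoc, ← EReal.coe_mul, ← hcoef]
  refine le_trans (Filter.limsup_le_limsup hptwise) ?_
  exact limsup_const_comp_nonpos hms hg (h ε hε)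

lemma dir_backward (hT : Continuous T) {m : ℕ} (hm : 2 ≤ m) {s : ℝ} (hs : 0 < s) [Nonempty X]
    (h : ∀ δ : ℝ, 0 < δ → Filter.atTop.limsup (uSeq (T^[m]) s δ) ≤ 0) :
    ∀ ε : ℝ, 0 < ε → Filter.atTop.limsup (uSeq T s ε) ≤ 0 := by
  intro ε hε
  have hm0 : 0 < m := lt_of_lt_of_le two_pos hm
  obtain ⟨δ, hδ0, hδε, hδ⟩ := exists_iterate_delta hT m hε
  have hg : Filter.Tendsto (fun n : ℕ => n / m + 1) Filter.atTop Filter.atTop := by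
    refine Filter.tendsto_atTop_atTop.2 fun b => ⟨b * m, fun n hn => ?_⟩
    have : b ≤ n / m := (Nat.le_div_iff_mul_le hm0).2 hn
    exact this.trans (Nat.le_succ _)
  have hptwise : ∀ᶠ n in Filter.atTop,
      uSeq T s ε n ≤ uSeq (T^[m]) s δ (n / m + 1) := by
    filter_upwards [eventually_ge_atTop 2] with n hn
    set N := n / m + 1 with hNdef
    have hNn : N ≤ n := by
      have h1 : n / m ≤ n / 2 := Nat.div_le_div_left hm two_pos
      have h2 : n / 2 + 1 ≤ n := by omega
      exact le_trans (by rw [hNdef]; exact Nat.add_le_add_right h1 1) h2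
    have hN1 : 1 ≤ N := by rw [hNdef]; exact Nat.succ_le_succ (Nat.zero_le _)
    have hcoef : (((n : ℝ) ^ s)⁻¹ : ℝ) ≤ (((N : ℝ) ^ s)⁻¹ : ℝ) := by
      have hNpos : (0 : ℝ) < (N : ℝ) ^ s :=
        Real.rpow_pos_of_pos (by exact_mod_cast hN1) s
      refine inv_anti₀ hNpos ?_
      exact Real.rpow_le_rpow (Nat.cast_nonneg N) (by exact_mod_cast hNn) hs.le
    have hlog : ENNReal.log (Sfun T n ε) ≤ ENNReal.log (Sfun (T^[m]) N δ) :=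
      ENNReal.log_monotone (Sfun_le_iterate hm0 hε.le hδ n)
    have hlog0 : (0 : EReal) ≤ ENNReal.log (Sfun (T^[m]) N δ) :=
      ENNReal.zero_le_log_iff.2 (one_le_Sfun (T^[m]) N δ)
    calc uSeq T s ε n
        ≤ (((((n : ℝ) ^ s)⁻¹ : ℝ) : EReal)) * ENNReal.log (Sfun (T^[m]) N δ) :=
          mul_le_mul_of_nonneg_left hlog
            (by exact_mod_cast inv_nonneg.2 (Real.rpow_nonneg (Nat.cast_nonneg n) s))
      _ ≤ uSeq (T^[m]) s δ N :=
          mul_le_mul_of_nonneg_right (by exact_mod_cast hcoef) hlog0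
  refine le_trans (Filter.limsup_le_limsup hptwise) ?_
  exact limsup_comp_nonpos hg (h δ hδ0)

end Main

theorem preDim_iterate {X : Type*} [MetricSpace X] [CompactSpace X]
    {T : X → X} (hT : Continuous T) (m : ℕ) (hm : 0 < m) :
    preDim (T^[m]) = preDim T := by
  rcases Nat.lt_or_ge m 2 with h1 | h2
  · have hm1 : m = 1 := by omega
    subst hm1
    rw [Function.iterate_one]
  rcases isEmpty_or_nonempty X with hX | hX
  · have hTT : T^[m] = T := funext fun x => isEmptyElim x
    rw [hTT]
  have hm0 : 0 < m := hm
  have key : ∀ s : ℝ, 0 < s → (preEnt (T^[m]) s = 0 ↔ preEnt T s = 0) := by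
    intro s hs
    rw [preEnt_zero_iff, preEnt_zero_iff]
    constructor
    · exact fun h => dir_backward hT h2 hs h
    · exact fun h => dir_forward hm0 hs h
  unfold preDim
  refine iInf_congr fun s => ?_
  by_cases hs : 0 < s
  · rw [show (0 < s ∧ preEnt (T^[m]) s = 0) = (0 < s ∧ preEnt T s = 0) from
      propext (and_congr_right fun hs' => key s hs')]
  · rw [show (0 < s ∧ preEnt (T^[m]) s = 0) = (0 < s ∧ preEnt T s = 0) from
      propext (by constructor <;> (intro h; exact absurd h.1 hs))]
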